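/- Let n, m ≥ 1 be integers with m ≥ n(n+1)/2. Then there exist an integer M ≥ 0 and a 6-local function f : {0,1}^M → {0,1}^{n+m} such that f applied to the uniform distribution on {0,1}^M is distributed exactly as D_hard(n,m). -/

import Mathlib

open Finset

def tow : ℕ → ℕ
  | 0 => 1
  | x + 1 => 2 ^ tow x

def hw {ι : Type*} [Fintype ι] (x : ι → Bool) : ℕ :=
  (Finset.univ.filter fun i => x i = true).card

def IsLocal {κ ι : Type*} (d : ℕ) (f : (κ → Bool) → ι → Bool) : Prop :=
  ∀ i : ι, ∃ T : Finset κ, T.card ≤ d ∧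
    ∀ x y : κ → Bool, (∀ j ∈ T, x j = y j) → f x i = f y i

def IsProductDist {κ : Type*} [Fintype κ] (p : (κ → Bool) → ℝ) : Prop :=
  ∃ γ : κ → ℝ, (∀ j, 0 ≤ γ j ∧ γ j ≤ 1) ∧
    ∀ x, p x = ∏ j, if x j then γ j else 1 - γ j

def IsDist {α : Type*} [Fintype α] (p : α → ℝ) : Prop :=
  (∀ a, 0 ≤ p a) ∧ ∑ a, p a = 1

noncomputable def push {α β : Type*} [Fintype α] [DecidableEq β] (f : α → β) (p : α → ℝ) :
    β → ℝ :=
  fun b => ∑ a, if f a = b then p a else 0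

noncomputable def tv {α : Type*} [Fintype α] (p q : α → ℝ) : ℝ :=
  (1 / 2) * ∑ a, |p a - q a|

noncomputable def biased {ι : Type*} [Fintype ι] (γ : ℝ) (x : ι → Bool) : ℝ :=
  ∏ i, if x i then γ else 1 - γ

noncomputable def unifParity (ι : Type*) [Fintype ι] [DecidableEq ι] (b : ℕ)
    (y : ι → Bool) : ℝ :=
  if hw y % 2 = b then
    (1 : ℝ) / ((Finset.univ.filter fun z : ι → Bool => hw z % 2 = b).card : ℝ)
  else 0

noncomputable def dHard (n m : ℕ) (p : (Fin n → Bool) × (Fin m → Bool)) : ℝ :=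
  biased (1 / 4) p.1 *
    (if hw p.1 % 2 = 1 then (1 / 2 : ℝ) ^ m
     else unifParity (Fin m) ((hw p.1 / 2) % 2) p.2)

def splitFun (n m : ℕ) (z : Fin (n + m) → Bool) : (Fin n → Bool) × (Fin m → Bool) :=
  (fun i => z (Fin.castAdd m i), fun j => z (Fin.natAdd n j))

noncomputable def dHard' (n m : ℕ) (z : Fin (n + m) → Bool) : ℝ :=
  dHard n m (splitFun n m z)

def wOf {V : Type*} (Z : V → Bool) : Sym2 V → Bool :=
  Sym2.lift ⟨fun u v => xor (Z u) (Z v), fun u v => Bool.xor_comm _ _⟩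

def ip {V : Type*} [Fintype V] (Z X : V → Bool) : ℕ :=
  (Finset.univ.filter fun v => Z v = true ∧ X v = true).card

noncomputable def dHost {V : Type*} [Fintype V] [DecidableEq V] (G : SimpleGraph V)
    [DecidableRel G.Adj] (z : (V ⊕ V ⊕ G.edgeSet) → Bool) : ℝ :=
  let X : V → Bool := fun v => z (Sum.inl v)
  let Y : V → Bool := fun v => z (Sum.inr (Sum.inl v))
  let W : G.edgeSet → Bool := fun e => z (Sum.inr (Sum.inr e))
  biased (1 / 4) X *
    ∑ Z : V → Bool,
      (1 / 2 : ℝ) ^ (Fintype.card V) *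
        (if ∀ e : G.edgeSet, W e = wOf Z e.1 then 1 else 0) *
        (if hw X % 2 = 1 then (1 / 2 : ℝ) ^ (Fintype.card V)
         else unifParity V ((ip Z X + hw X / 2) % 2) Y)

namespace S11

def dec : ℕ → ℕ × ℕ
  | 0 => (0, 0)
  | k+1 => if (dec k).1 = (dec k).2 then (0, (dec k).2 + 1) else ((dec k).1 + 1, (dec k).2)

def enc (p : ℕ × ℕ) : ℕ := p.2 * (p.2 + 1) / 2 + p.1

lemma dec_le (k : ℕ) : (dec k).1 ≤ (dec k).2 := by
  induction k with
  | zero => simp [dec]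
  | succ k ih =>
    unfold dec
    split <;> simp <;> omega

lemma tri_succ (j : ℕ) : (j+1) * (j+2) / 2 = j * (j+1) / 2 + (j+1) := by
  have h1 : (j+1) * (j+2) = j * (j+1) + 2 * (j+1) := by ring
  have h2 : 2 ∣ j * (j+1) := Nat.even_mul_succ_self j |>.two_dvd
  omega

lemma enc_dec (k : ℕ) : enc (dec k) = k := by
  induction k with
  | zero => simp [dec, enc]
  | succ k ih =>
    unfold dec
    split
    next h =>
      simp only [enc] at ih ⊢
      have := tri_succ (dec k).2
      show ((dec k).2 + 1) * ((dec k).2 + 2) / 2 + 0 = k + 1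
      omega
    next h =>
      simp only [enc] at ih ⊢
      omega

lemma tri_mono {a b : ℕ} (h : a < b) : a * (a+1) / 2 + a < b * (b+1) / 2 := by
  have h2 : a + 1 ≤ b := h
  have : (a+1) * (a+2) / 2 ≤ b * (b+1) / 2 := by
    apply Nat.div_le_div_right
    apply Nat.mul_le_mul h2
    omega
  have := tri_succ a
  omega

lemma tri_le_tri {a b : ℕ} (h : a ≤ b) : a * (a+1) / 2 ≤ b * (b+1) / 2 :=
  Nat.div_le_div_right (Nat.mul_le_mul h (by omega))

lemma enc_inj {p q : ℕ × ℕ} (hp : p.1 ≤ p.2) (hq : q.1 ≤ q.2) (h : enc p = enc q) : p = q := by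
  unfold enc at h
  rcases Nat.lt_trichotomy p.2 q.2 with h2 | h2 | h2
  · have := tri_mono h2; omega
  · have : p.1 = q.1 := by rw [h2] at h; omega
    exact Prod.ext this h2
  · have := tri_mono h2; omega

lemma dec_enc {p : ℕ × ℕ} (hp : p.1 ≤ p.2) : dec (enc p) = p :=
  enc_inj (dec_le _) hp (enc_dec (enc p))

lemma enc_lt {i j n : ℕ} (hij : i ≤ j) (hj : j < n) : enc (i, j) < n * (n+1) / 2 := by
  have := tri_mono hj
  unfold enc
  simp only at *
  omega

def xN {n : ℕ} (x : Fin n → Bool) (i : ℕ) : Bool :=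
  if h : i < n then x ⟨i, h⟩ else false

def monoB {n : ℕ} (x : Fin n → Bool) (s : Bool) (p : ℕ × ℕ) : Bool :=
  if p.1 = p.2 then xN x p.1 && s else xN x p.1 && xN x p.2

def cval {n : ℕ} (x : Fin n → Bool) (s : Bool) (k : ℕ) : Bool := monoB x s (dec k)

def Cnum {n : ℕ} (x : Fin n → Bool) : ℕ :=
  (((Finset.range n).filter fun i => xN x i = true) ×ˢ
    ((Finset.range n).filter fun i => xN x i = true) |>.filter fun p => p.1 < p.2).card

lemma range_filter_eq {n : ℕ} (x : Fin n → Bool) :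
    ((Finset.range n).filter fun i => xN x i = true)
      = (Finset.univ.filter fun i : Fin n => x i = true).image Fin.val := by
  ext k
  simp only [Finset.mem_filter, Finset.mem_range, Finset.mem_image, Finset.mem_univ, true_and]
  simp only [xN]
  constructor
  · rintro ⟨hk, hx⟩
    rw [dif_pos hk] at hx
    exact ⟨⟨k, hk⟩, hx, rfl⟩
  · rintro ⟨i, hx, rfl⟩
    refine ⟨i.isLt, ?_⟩
    rw [dif_pos i.isLt]
    simpa using hx

lemma hw_eq_card_range {n : ℕ} (x : Fin n → Bool) :
    ((Finset.range n).filter fun i => xN x i = true).card = hw x := by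
  rw [range_filter_eq, Finset.card_image_of_injective _ Fin.val_injective]; rfl

lemma sum_ind_range {n : ℕ} (x : Fin n → Bool) :
    ∑ i ∈ Finset.range n, (if xN x i = true then 1 else 0) = hw x := by
  rw [Finset.sum_boole]
  simpa using hw_eq_card_range x

lemma hw_cval {n m : ℕ} (hm : n * (n+1) / 2 ≤ m) (x : Fin n → Bool) (s : Bool) :
    hw (fun k : Fin m => cval x s k.val) = Cnum x + (if s then hw x else 0) := by
  classical
  have h1 : (hw (fun k : Fin m => cval x s k.val) : ℕ)
      = ∑ k ∈ Finset.range m, (if cval x s k = true then 1 else 0) := by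
    rw [hw, ← Fin.sum_univ_eq_sum_range (fun k => if cval x s k = true then (1:ℕ) else 0)]
    rw [Finset.sum_boole]
    simp
  rw [h1]
  have h2 : ∑ k ∈ Finset.range m, (if cval x s k = true then 1 else 0)
      = ∑ k ∈ Finset.range (n * (n+1) / 2), (if cval x s k = true then 1 else 0) := by
    symm
    apply Finset.sum_subset
    · intro k hk; simp at hk ⊢; omega
    · intro k _ hk
      simp only [Finset.mem_range, not_lt] at hk
      have hd2 : ¬ (dec k).2 < n := by
        intro hlt
        have h3 : enc (dec k) < n * (n+1)/2 := by
          have := enc_lt (dec_le k) hlt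
          simpa using this
        rw [enc_dec] at h3; omega
      have hz : cval x s k = false := by
        unfold cval monoB
        have hx2 : xN x (dec k).2 = false := by simp [xN, hd2]
        split
        · next h => rw [show (dec k).1 = (dec k).2 from h, hx2]; simp
        · rw [hx2]; simp
      simp [hz]
  rw [h2]
  set Tri : Finset (ℕ × ℕ) :=
    ((Finset.range n) ×ˢ (Finset.range n)).filter (fun p => p.1 ≤ p.2) with hTri
  have h3 : ∑ k ∈ Finset.range (n * (n+1) / 2), (if cval x s k = true then 1 else 0)
      = ∑ p ∈ Tri, (if monoB x s p = true then 1 else 0) := by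
    apply Finset.sum_nbij' (i := fun k => dec k) (j := fun p => enc p)
    · intro k hk
      simp only [Finset.mem_range] at hk
      have hd2 : (dec k).2 < n := by
        by_contra hge
        have := tri_le_tri (show n ≤ (dec k).2 by omega)
        have h4 := enc_dec k
        unfold enc at h4
        omega
      simp only [hTri, Finset.mem_filter, Finset.mem_product, Finset.mem_range]
      exact ⟨⟨lt_of_le_of_lt (dec_le k) hd2, hd2⟩, dec_le k⟩
    · intro p hp
      simp only [hTri, Finset.mem_filter, Finset.mem_product, Finset.mem_range] at hp
      simp only [Finset.mem_range]
      have := enc_lt hp.2 hp.1.2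
      calc enc p = enc (p.1, p.2) := by rfl
        _ < n * (n+1)/2 := this
      
    · intro k _; exact enc_dec k
    · intro p hp
      simp only [hTri, Finset.mem_filter, Finset.mem_product, Finset.mem_range] at hp
      exact dec_enc hp.2
    · intro k _; rfl
  rw [h3]
  rw [← Finset.sum_filter_add_sum_filter_not Tri (fun p => p.1 < p.2)]
  congr 1
  · rw [Finset.sum_boole, Finset.filter_filter]
    unfold Cnum
    norm_cast
    congr 1
    ext p
    simp only [Finset.mem_filter, Finset.mem_product, Finset.mem_range, hTri, monoB]
    constructor
    · rintro ⟨⟨⟨h1', h2'⟩, h3'⟩, h4', h5'⟩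
      rw [if_neg (by omega)] at h5'
      simp only [Bool.and_eq_true] at h5'
      exact ⟨⟨⟨h1', h5'.1⟩, h2', h5'.2⟩, h4'⟩
    · rintro ⟨⟨⟨h1', hx1⟩, h2', hx2⟩, h4'⟩
      refine ⟨⟨⟨h1', h2'⟩, le_of_lt h4'⟩, h4', ?_⟩
      rw [if_neg (by omega)]
      simp [hx1, hx2]
  · have hdiag : Tri.filter (fun p => ¬ p.1 < p.2) = (Finset.range n).image (fun i => (i, i)) := by
      ext p
      simp only [Finset.mem_filter, Finset.mem_product, Finset.mem_range, hTri,
        Finset.mem_image]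
      constructor
      · rintro ⟨⟨⟨h1', h2'⟩, h3'⟩, h4'⟩
        refine ⟨p.1, h1', ?_⟩
        have h5' : p.1 = p.2 := by omega
        rw [Prod.ext_iff]
        exact ⟨rfl, h5'⟩
      · rintro ⟨i, hi, rfl⟩
        simp; omega
    rw [hdiag, Finset.sum_image (by intro a _ b _ h; simpa using (Prod.ext_iff.mp h).1)]
    cases s with
    | false => simp [monoB]
    | true =>
      rw [if_pos rfl]
      have hcong : ∀ i ∈ Finset.range n, (if monoB x true (i, i) = true then (1:ℕ) else 0)
          = (if xN x i = true then 1 else 0) := by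
        intro i _
        simp [monoB]
      rw [Finset.sum_congr rfl hcong, sum_ind_range]

lemma two_Cnum {n : ℕ} (x : Fin n → Bool) : 2 * Cnum x + hw x = hw x * hw x := by
  classical
  set S := (Finset.range n).filter (fun i => xN x i = true) with hS
  have hcard : S.card = hw x := hw_eq_card_range x
  have hprod : (S ×ˢ S).card = hw x * hw x := by rw [Finset.card_product, hcard]
  have hsplit : S ×ˢ S = ((S ×ˢ S).filter (fun p => p.1 < p.2)) ∪
      (((S ×ˢ S).filter (fun p => p.2 < p.1)) ∪ ((S ×ˢ S).filter (fun p => p.1 = p.2))) := by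
    rw [← Finset.filter_or, ← Finset.filter_or]
    rw [Finset.filter_true_of_mem]
    intro p _; omega
  have hd1 : Disjoint ((S ×ˢ S).filter (fun p => p.1 < p.2))
      (((S ×ˢ S).filter (fun p => p.2 < p.1)) ∪ ((S ×ˢ S).filter (fun p => p.1 = p.2))) := by
    rw [Finset.disjoint_left]
    intro p hp hp'
    simp only [Finset.mem_filter, Finset.mem_union] at hp hp'
    omega
  have hd2 : Disjoint ((S ×ˢ S).filter (fun p => p.2 < p.1))
      ((S ×ˢ S).filter (fun p => p.1 = p.2)) := by
    rw [Finset.disjoint_left]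
    intro p hp hp'
    simp only [Finset.mem_filter] at hp hp'
    omega
  have hswap : ((S ×ˢ S).filter (fun p => p.2 < p.1)).card
      = ((S ×ˢ S).filter (fun p => p.1 < p.2)).card := by
    apply Finset.card_nbij' (i := fun p => p.swap) (j := fun p => p.swap)
    · intro p hp; simp only [Finset.mem_coe, Finset.mem_filter, Finset.mem_product] at hp ⊢
      exact ⟨⟨hp.1.2, hp.1.1⟩, hp.2⟩
    · intro p hp; simp only [Finset.mem_coe, Finset.mem_filter, Finset.mem_product] at hp ⊢
      exact ⟨⟨hp.1.2, hp.1.1⟩, hp.2⟩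
    · intro p _; simp
    · intro p _; simp
  have hdiagc : ((S ×ˢ S).filter (fun p => p.1 = p.2)).card = hw x := by
    rw [← hcard]
    apply Finset.card_nbij' (i := fun p => p.1) (j := fun i => (i, i))
    · intro p hp; simp only [Finset.mem_coe, Finset.mem_filter, Finset.mem_product] at hp; exact hp.1.1
    · intro i hi; simp only [Finset.mem_coe, Finset.mem_filter, Finset.mem_product]; exact ⟨⟨hi, hi⟩, trivial⟩
    · intro p hp; simp only [Finset.mem_coe, Finset.mem_filter] at hp
      have : p.1 = p.2 := hp.2
      rw [Prod.ext_iff]; simp [this]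
    · intro i _; rfl
  have htot : (S ×ˢ S).card = ((S ×ˢ S).filter (fun p => p.1 < p.2)).card
      + (((S ×ˢ S).filter (fun p => p.2 < p.1)).card
        + ((S ×ˢ S).filter (fun p => p.1 = p.2)).card) := by
    conv_lhs => rw [hsplit]
    rw [Finset.card_union_of_disjoint hd1, Finset.card_union_of_disjoint hd2]
  unfold Cnum
  rw [← hS] at *
  omega

lemma Cnum_mod_even {n : ℕ} (x : Fin n → Bool) (he : hw x % 2 = 0) :
    Cnum x % 2 = (hw x / 2) % 2 := by
  have h2 := two_Cnum x
  set t := hw x / 2 with ht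
  have hhw : hw x = 2 * t := by omega
  rw [hhw] at h2
  have hsq : (2*t) * (2*t) = 2 * (2 * (t * t)) := by ring
  rw [hsq] at h2
  have hle : t ≤ 2 * (t * t) := by nlinarith
  omega

def e2 : Bool ≃ ZMod 2 where
  toFun b := if b then 1 else 0
  invFun z := decide (z = 1)
  left_inv b := by cases b <;> decide
  right_inv z := by revert z; decide

lemma fin_succ_val {m : ℕ} [NeZero m] (k : Fin m) :
    ((k + 1 : Fin m)).val = if k.val + 1 = m then 0 else k.val + 1 := by
  have h1 : ((k + 1 : Fin m)).val = (k.val + (1 : Fin m).val) % m := Fin.val_add _ _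
  have h2 : (1 : Fin m).val = 1 % m := Fin.val_one' m
  have hm : 0 < m := Fin.pos k
  by_cases h : k.val + 1 = m
  · rw [if_pos h]
    rcases Nat.lt_or_ge 1 m with h3 | h3
    · rw [h1, h2, Nat.mod_eq_of_lt h3, h, Nat.mod_self]
    · have hm1 : m = 1 := by omega
      subst hm1
      rw [h1]
      simp
  · have hk : k.val + 1 < m := by have := k.isLt; omega
    have h3 : 1 < m := by omega
    rw [h1, h2, Nat.mod_eq_of_lt h3, Nat.mod_eq_of_lt hk, if_neg h]

section Cycle

open Fin.NatCast

variable {m : ℕ} [NeZero m] (V : Fin m → ZMod 2)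

noncomputable def pf (t : ℕ) : ZMod 2 := ∑ j ∈ Finset.range t, V ((j : ℕ) : Fin m)

lemma pf_m : pf V m = ∑ k : Fin m, V k := by
  rw [pf, ← Fin.sum_univ_eq_sum_range (fun j => V ((j : ℕ) : Fin m)) m]
  apply Finset.sum_congr rfl
  intro k _
  rw [Fin.cast_val_eq_self]

lemma sol_eq {U : Fin m → ZMod 2} (hU : ∀ k : Fin m, U (k + 1) = U k + V k) :
    ∀ t : ℕ, U ((t : ℕ) : Fin m) = U ((0 : ℕ) : Fin m) + pf V t := by
  intro t
  induction t with
  | zero => simp [pf]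
  | succ t ih =>
    have hc : ((t + 1 : ℕ) : Fin m) = ((t : ℕ) : Fin m) + 1 := by push_cast; ring
    rw [hc, hU, ih]
    simp only [pf, Finset.sum_range_succ]
    ring

lemma sol_sum_zero {U : Fin m → ZMod 2} (hU : ∀ k : Fin m, U (k + 1) = U k + V k) :
    ∑ k : Fin m, V k = 0 := by
  have h1 := sol_eq V hU m
  rw [show ((m : ℕ) : Fin m) = 0 by simp] at h1
  have h2 : ((0:ℕ) : Fin m) = 0 := by norm_num
  rw [h2] at h1
  have h3 : pf V m = 0 := by linear_combination -h1
  rw [← pf_m]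
  exact h3

noncomputable def ub (c : ZMod 2) : Fin m → ZMod 2 := fun k => c + pf V k.val

lemma ub_sol (hsum : ∑ k : Fin m, V k = 0) (c : ZMod 2) :
    ∀ k : Fin m, ub V c (k + 1) = ub V c k + V k := by
  intro k
  unfold ub
  rw [fin_succ_val]
  by_cases h : k.val + 1 = m
  · rw [if_pos h]
    have h2 : pf V m = 0 := by rwa [pf_m]
    have h3 : pf V m = pf V k.val + V k := by
      have h4 : pf V (k.val + 1) = pf V k.val + V k := by
        simp only [pf, Finset.sum_range_succ, Fin.cast_val_eq_self]
      rw [h] at h4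
      exact h4
    rw [show pf V 0 = 0 by simp [pf]]
    rw [h3] at h2
    linear_combination -h2
  · rw [if_neg h, pf, Finset.sum_range_succ, ← pf, Fin.cast_val_eq_self]
    ring

lemma cycle_count_zmod :
    (Finset.univ.filter fun U : Fin m → ZMod 2 => ∀ k : Fin m, U (k + 1) = U k + V k).card
      = if ∑ k : Fin m, V k = 0 then 2 else 0 := by
  classical
  by_cases hsum : ∑ k : Fin m, V k = 0
  · rw [if_pos hsum]
    have hset : (Finset.univ.filter fun U : Fin m → ZMod 2 => ∀ k : Fin m, U (k + 1) = U k + V k)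
        = {ub V 0, ub V 1} := by
      ext U
      simp only [Finset.mem_filter, Finset.mem_univ, true_and, Finset.mem_insert,
        Finset.mem_singleton]
      constructor
      · intro hU
        have hform : U = ub V (U 0) := by
          funext k
          have := sol_eq V hU k.val
          rw [Fin.cast_val_eq_self] at this
          rw [this, ub]
          norm_num
        rcases (by decide : ∀ z : ZMod 2, z = 0 ∨ z = 1) (U 0) with h | h
        · left; rw [hform, h]
        · right; rw [hform, h]
      · rintro (rfl | rfl)
        · exact ub_sol V hsum 0
        · exact ub_sol V hsum 1
    have hne : ub V 0 ≠ ub V 1 := by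
      intro hmem
      have h5 := congrFun hmem 0
      simp only [ub] at h5
      have h0 : pf V (0 : Fin m).val = 0 := by simp [pf]
      rw [h0] at h5
      simp at h5
    rw [hset, Finset.card_insert_of_notMem (by simpa using hne), Finset.card_singleton]
  · rw [if_neg hsum]
    rw [Finset.card_eq_zero, Finset.filter_eq_empty_iff]
    intro U _
    intro hU
    exact hsum (sol_sum_zero V hU)

end Cycle

lemma cycle_count {m : ℕ} [NeZero m] (v : Fin m → Bool) :
    (Finset.univ.filter fun u : Fin m → Bool => ∀ k : Fin m, xor (u k) (u (k + 1)) = v k).card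
      = if hw v % 2 = 0 then 2 else 0 := by
  classical
  set V : Fin m → ZMod 2 := fun k => e2 (v k) with hV
  have htrans : (Finset.univ.filter fun u : Fin m → Bool => ∀ k : Fin m, xor (u k) (u (k + 1)) = v k).card
      = (Finset.univ.filter fun U : Fin m → ZMod 2 => ∀ k : Fin m, U (k + 1) = U k + V k).card := by
    apply Finset.card_nbij' (i := fun u => fun k => e2 (u k)) (j := fun U => fun k => e2.symm (U k))
    · intro u hu
      simp only [Finset.mem_coe, Finset.mem_filter, Finset.mem_univ, true_and] at hu ⊢
      intro k
      have hgen : ∀ (a b c : Bool), xor a b = c → e2 b = e2 a + e2 c := by decide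
      exact hgen _ _ _ (hu k)
    · intro U hU
      simp only [Finset.mem_coe, Finset.mem_filter, Finset.mem_univ, true_and] at hU ⊢
      intro k
      have hgen : ∀ (a b : ZMod 2) (c : Bool), b = a + e2 c → xor (e2.symm a) (e2.symm b) = c := by decide
      exact hgen _ _ _ (hU k)
    · intro u _; funext k; simp
    · intro U _; funext k; simp
  rw [htrans, cycle_count_zmod]
  congr 1
  have hsum : ∑ k : Fin m, V k = ((hw v : ℕ) : ZMod 2) := by
    rw [hw]
    rw [Finset.natCast_card_filter]
    apply Finset.sum_congr rfl
    intro k _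
    rcases h : v k <;> simp [hV, e2, h]
  rw [hsum]
  rw [ZMod.natCast_eq_zero_iff]
  simp [Nat.dvd_iff_mod_eq_zero]

lemma hw_le {n : ℕ} (x : Fin n → Bool) : hw x ≤ n := by
  rw [hw]
  calc (Finset.univ.filter fun i => x i = true).card ≤ (univ : Finset (Fin n)).card :=
        Finset.card_filter_le _ _
    _ = n := by simp

lemma and_count {n : ℕ} (x : Fin n → Bool) :
    ((Finset.univ : Finset ((Fin n → Bool) × (Fin n → Bool))).filter
      fun ab => ∀ i, (ab.1 i && ab.2 i) = x i).card = 3 ^ (n - hw x) := by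
  classical
  have h1 : ((Finset.univ : Finset ((Fin n → Bool) × (Fin n → Bool))).filter
        fun ab => ∀ i, (ab.1 i && ab.2 i) = x i).card
      = ((Finset.univ : Finset (Fin n → Bool × Bool)).filter
        fun g => ∀ i, ((g i).1 && (g i).2) = x i).card := by
    apply Finset.card_nbij' (i := fun ab => fun i => (ab.1 i, ab.2 i))
      (j := fun g => (fun i => (g i).1, fun i => (g i).2))
    · intro ab hab; simp only [Finset.mem_coe, Finset.mem_filter, Finset.mem_univ, true_and] at hab ⊢
      exact hab
    · intro g hg; simp only [Finset.mem_coe, Finset.mem_filter, Finset.mem_univ, true_and] at hg ⊢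
      exact hg
    · intro ab _; rfl
    · intro g _; rfl
  rw [h1]
  have h2 : ((Finset.univ : Finset (Fin n → Bool × Bool)).filter
        fun g => ∀ i, ((g i).1 && (g i).2) = x i)
      = Fintype.piFinset (fun i => Finset.univ.filter fun p : Bool × Bool => (p.1 && p.2) = x i) := by
    ext g
    simp [Fintype.mem_piFinset]
  rw [h2, Fintype.card_piFinset]
  have h3 : ∀ i, (Finset.univ.filter fun p : Bool × Bool => (p.1 && p.2) = x i).card
      = if x i = true then 1 else 3 := by
    intro i
    rcases hx : x i <;> simp [hx] <;> decide
  rw [Finset.prod_congr rfl (fun i _ => h3 i)]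
  rw [Finset.prod_ite (fun _ => (1:ℕ)) (fun _ => (3:ℕ)), Finset.prod_const, Finset.prod_const,
    one_pow, one_mul]
  have h4 : (Finset.univ.filter fun i : Fin n => x i = true).card
      + (Finset.univ.filter fun i : Fin n => ¬ x i = true).card = n := by
    simpa using Finset.card_filter_add_card_filter_not
      (s := (Finset.univ : Finset (Fin n))) (p := fun i => x i = true)
  have hhw : (Finset.univ.filter fun i : Fin n => x i = true).card = hw x := by rw [hw]
  clear h1 h2 h3
  have h5 : (Finset.univ.filter fun i : Fin n => ¬ x i = true).card = n - hw x := by omega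
  rw [h5]

lemma slice_card {m : ℕ} (hm : 0 < m) (b : ℕ) (hb : b < 2) :
    ((Finset.univ : Finset (Fin m → Bool)).filter fun z => hw z % 2 = b).card = 2 ^ (m - 1) := by
  classical
  set i0 : Fin m := ⟨0, hm⟩
  set flip : (Fin m → Bool) → (Fin m → Bool) := fun z => Function.update z i0 (! z i0) with hflip
  have hwflip : ∀ z : Fin m → Bool, hw (flip z) = if z i0 = true then hw z - 1 else hw z + 1 := by
    intro z
    have hset : (Finset.univ.filter fun i => flip z i = true)
        = if z i0 = true then (Finset.univ.filter fun i => z i = true).erase i0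
          else insert i0 (Finset.univ.filter fun i => z i = true) := by
      rcases hz : z i0 with _ | _
      · rw [if_neg (by simp [hz])]
        ext j
        by_cases hj : j = i0
        · subst hj; simp [hflip, Function.update_self, hz]
        · simp [hflip, Function.update_of_ne hj, hj]
      · rw [if_pos (by simp [hz])]
        ext j
        by_cases hj : j = i0
        · subst hj; simp [hflip, Function.update_self, hz]
        · simp [hflip, Function.update_of_ne hj, hj]
    rcases hz : z i0 with _ | _
    · rw [hw, hset, if_neg (by simp [hz]), if_neg (by simp [hz])]
      rw [Finset.card_insert_of_notMem (by simp [hz])]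
      rfl
    · rw [hw, hset, if_pos (by simp [hz]), if_pos (by simp [hz])]
      rw [Finset.card_erase_of_mem (by simp [hz])]
      rfl
  have hpos : ∀ z : Fin m → Bool, z i0 = true → 1 ≤ hw z := by
    intro z hz
    rw [hw]
    have : i0 ∈ Finset.univ.filter fun i => z i = true := by simp [hz]
    exact Finset.card_pos.mpr ⟨i0, this⟩
  have hparflip : ∀ z : Fin m → Bool, hw (flip z) % 2 = 1 - hw z % 2 := by
    intro z
    have := hwflip z
    rcases hz : z i0 with _ | _
    · rw [hz] at this; simp at this; omega
    · have h1 := hpos z hz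
      rw [hz] at this; simp at this; omega
  have hinvol : ∀ z : Fin m → Bool, flip (flip z) = z := by
    intro z
    funext j
    by_cases hj : j = i0
    · subst hj; simp [hflip, Function.update_self]
    · simp [hflip, Function.update_of_ne hj]
  have hswap : ∀ b1 b2 : ℕ, b1 < 2 → b2 = 1 - b1 →
      ((Finset.univ : Finset (Fin m → Bool)).filter fun z => hw z % 2 = b1).card
      = ((Finset.univ : Finset (Fin m → Bool)).filter fun z => hw z % 2 = b2).card := by
    intro b1 b2 hb1 hb2
    apply Finset.card_nbij' (i := flip) (j := flip)
    · intro z hz; simp only [Finset.mem_coe, Finset.mem_filter, Finset.mem_univ, true_and] at hz ⊢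
      rw [hparflip, hz]; omega
    · intro z hz; simp only [Finset.mem_coe, Finset.mem_filter, Finset.mem_univ, true_and] at hz ⊢
      rw [hparflip, hz]; omega
    · intro z _; exact hinvol z
    · intro z _; exact hinvol z
  have htot : ((Finset.univ : Finset (Fin m → Bool)).filter fun z => hw z % 2 = 0).card
      + ((Finset.univ : Finset (Fin m → Bool)).filter fun z => hw z % 2 = 1).card = 2 ^ m := by
    have h1 : ((Finset.univ : Finset (Fin m → Bool)).filter fun z => hw z % 2 = 0).card
        + ((Finset.univ : Finset (Fin m → Bool)).filter fun z => ¬ hw z % 2 = 0).card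
        = ((Finset.univ : Finset (Fin m → Bool))).card := by
      simpa using Finset.card_filter_add_card_filter_not
        (s := (Finset.univ : Finset (Fin m → Bool))) (p := fun z => hw z % 2 = 0)
    have h2 : ((Finset.univ : Finset (Fin m → Bool)).filter fun z => ¬ hw z % 2 = 0)
        = ((Finset.univ : Finset (Fin m → Bool)).filter fun z => hw z % 2 = 1) := by
      apply Finset.filter_congr
      intro z _
      constructor
      · intro h; omega
      · intro h; omega
    rw [h2] at h1
    rw [h1]
    rw [Finset.card_univ]
    simp [Fintype.card_fun]
  have heq := hswap 0 1 (by omega) (by omega)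
  obtain ⟨q, rfl⟩ : ∃ q, m = q + 1 := ⟨m - 1, by omega⟩
  have hpow : (2:ℕ) ^ (q + 1) = 2 * 2 ^ q := by rw [pow_succ]; ring
  simp only [Nat.add_sub_cancel] at *
  interval_cases b
  · omega
  · omega

lemma biased_eq {n : ℕ} (γ : ℝ) (x : Fin n → Bool) :
    biased γ x = γ ^ hw x * (1 - γ) ^ (n - hw x) := by
  classical
  rw [biased]
  have h0 : ∀ i : Fin n, (if x i then γ else 1 - γ) = (if x i = true then γ else 1 - γ) := by
    intro i; rcases hx : x i <;> simp [hx]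
  rw [Finset.prod_congr rfl (fun i _ => h0 i)]
  rw [Finset.prod_ite (fun _ => γ) (fun _ => 1 - γ), Finset.prod_const, Finset.prod_const]
  have h4 : (Finset.univ.filter fun i : Fin n => x i = true).card
      + (Finset.univ.filter fun i : Fin n => ¬ x i = true).card = n := by
    simpa using Finset.card_filter_add_card_filter_not
      (s := (Finset.univ : Finset (Fin n))) (p := fun i => x i = true)
  have hhw : (Finset.univ.filter fun i : Fin n => x i = true).card = hw x := by rw [hw]
  congr 2
  omega

lemma hw_xor_parity {m : ℕ} (y c : Fin m → Bool) :
    hw (fun k => xor (y k) (c k)) % 2 = (hw y + hw c) % 2 := by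
  classical
  have key : ((hw (fun k => xor (y k) (c k)) : ℕ) : ZMod 2) = ((hw y + hw c : ℕ) : ZMod 2) := by
    push_cast
    rw [hw, hw, hw]
    rw [Finset.natCast_card_filter, Finset.natCast_card_filter, Finset.natCast_card_filter]
    rw [← Finset.sum_add_distrib]
    apply Finset.sum_congr rfl
    intro k _
    rcases h1 : y k <;> rcases h2 : c k <;> simp [h1, h2] <;> decide
  rw [ZMod.natCast_eq_natCast_iff'] at key
  exact key

section Glue

variable (n m : ℕ)

def iA (i : Fin n) : Fin (n + (n + (1 + m))) := Fin.castAdd _ i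
def iB (i : Fin n) : Fin (n + (n + (1 + m))) := Fin.natAdd n (Fin.castAdd (1 + m) i)
def iS : Fin (n + (n + (1 + m))) := Fin.natAdd n (Fin.natAdd n (Fin.castAdd m (0 : Fin 1)))
def iU (k : Fin m) : Fin (n + (n + (1 + m))) := Fin.natAdd n (Fin.natAdd n (Fin.natAdd 1 k))

def glue (a b : Fin n → Bool) (s : Bool) (u : Fin m → Bool) : Fin (n + (n + (1 + m))) → Bool :=
  Fin.addCases a (Fin.addCases b (Fin.addCases (fun _ => s) u))

variable {n m}

@[simp] lemma glue_iA (a b : Fin n → Bool) (s : Bool) (u : Fin m → Bool) (i : Fin n) :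
    glue n m a b s u (iA n m i) = a i := by
  rw [glue, iA, Fin.addCases_left]

@[simp] lemma glue_iB (a b : Fin n → Bool) (s : Bool) (u : Fin m → Bool) (i : Fin n) :
    glue n m a b s u (iB n m i) = b i := by
  rw [glue, iB, Fin.addCases_right, Fin.addCases_left]

@[simp] lemma glue_iS (a b : Fin n → Bool) (s : Bool) (u : Fin m → Bool) :
    glue n m a b s u (iS n m) = s := by
  rw [glue, iS, Fin.addCases_right, Fin.addCases_right, Fin.addCases_left]

@[simp] lemma glue_iU (a b : Fin n → Bool) (s : Bool) (u : Fin m → Bool) (k : Fin m) :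
    glue n m a b s u (iU n m k) = u k := by
  rw [glue, iU, Fin.addCases_right, Fin.addCases_right, Fin.addCases_right]

lemma glue_bijective :
    Function.Bijective (fun t : ((Fin n → Bool) × ((Fin n → Bool) × (Bool × (Fin m → Bool)))) =>
      glue n m t.1 t.2.1 t.2.2.1 t.2.2.2) := by
  rw [Function.bijective_iff_has_inverse]
  refine ⟨fun w => (fun i => w (iA n m i), (fun i => w (iB n m i), (w (iS n m), fun k => w (iU n m k)))), ?_, ?_⟩
  · rintro ⟨a, b, s, u⟩
    simp only [glue_iA, glue_iB, glue_iS, glue_iU]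
  · intro w
    funext idx
    refine Fin.addCases (motive := fun idx => glue n m _ _ _ _ idx = w idx) ?_ ?_ idx
    · intro i
      exact glue_iA _ _ _ _ i
    · intro j
      refine Fin.addCases (motive := fun j => glue n m _ _ _ _ (Fin.natAdd n j) = w (Fin.natAdd n j)) ?_ ?_ j
      · intro i
        exact glue_iB _ _ _ _ i
      · intro j'
        refine Fin.addCases (motive := fun j' => glue n m _ _ _ _ (Fin.natAdd n (Fin.natAdd n j')) = w (Fin.natAdd n (Fin.natAdd n j'))) ?_ ?_ j'
        · intro j''
          have h0 : j'' = 0 := Subsingleton.elim _ _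
          subst h0
          exact glue_iS _ _ _ _
        · intro k
          exact glue_iU _ _ _ _ k

end Glue

section MyF

variable (n m : ℕ) [NeZero m]

def myF (w : Fin (n + (n + (1 + m))) → Bool) : Fin (n + m) → Bool :=
  Fin.addCases (fun i => w (iA n m i) && w (iB n m i))
    (fun k => xor (xor (w (iU n m k)) (w (iU n m (k + 1))))
      (cval (fun i => w (iA n m i) && w (iB n m i)) (w (iS n m)) k.val))

variable {n m}

lemma myF_left (w : Fin (n + (n + (1 + m))) → Bool) (i : Fin n) :
    myF n m w (Fin.castAdd m i) = (w (iA n m i) && w (iB n m i)) := by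
  rw [myF, Fin.addCases_left]

lemma myF_right (w : Fin (n + (n + (1 + m))) → Bool) (k : Fin m) :
    myF n m w (Fin.natAdd n k) = xor (xor (w (iU n m k)) (w (iU n m (k + 1))))
      (cval (fun i => w (iA n m i) && w (iB n m i)) (w (iS n m)) k.val) := by
  rw [myF, Fin.addCases_right]

def abSet (n m : ℕ) (t : ℕ) : Finset (Fin (n + (n + (1 + m)))) :=
  if h : t < n then {iA n m ⟨t, h⟩, iB n m ⟨t, h⟩} else ∅

lemma abSet_card (t : ℕ) : (abSet n m t).card ≤ 2 := by
  rw [abSet]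
  split
  · exact (Finset.card_insert_le _ _).trans (by simp)
  · simp

lemma xN_congr {w w' : Fin (n + (n + (1 + m))) → Bool} (t : ℕ)
    (h : ∀ j ∈ abSet n m t, w j = w' j) :
    xN (fun i => w (iA n m i) && w (iB n m i)) t
      = xN (fun i => w' (iA n m i) && w' (iB n m i)) t := by
  rw [xN, xN]
  split
  · next ht =>
    have h1 := h (iA n m ⟨t, ht⟩) (by rw [abSet, dif_pos ht]; simp)
    have h2 := h (iB n m ⟨t, ht⟩) (by rw [abSet, dif_pos ht]; simp)
    rw [h1, h2]
  · rfl

lemma myF_local : IsLocal 6 (myF n m) := by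
  intro idx
  refine Fin.addCases (motive := fun idx => ∃ T : Finset (Fin (n + (n + (1 + m)))), T.card ≤ 6 ∧
    ∀ x y, (∀ j ∈ T, x j = y j) → myF n m x idx = myF n m y idx) ?_ ?_ idx
  · intro i
    refine ⟨{iA n m i, iB n m i}, (Finset.card_insert_le _ _).trans (by simp), ?_⟩
    intro x y h
    rw [myF_left, myF_left, h _ (by simp), h _ (by simp)]
  · intro k
    by_cases hd : (dec k.val).1 = (dec k.val).2
    · refine ⟨insert (iS n m) ({iU n m k, iU n m (k + 1)} ∪ abSet n m (dec k.val).2), ?_, ?_⟩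
      · calc (insert (iS n m) ({iU n m k, iU n m (k + 1)} ∪ abSet n m (dec k.val).2)).card
            ≤ ({iU n m k, iU n m (k + 1)} ∪ abSet n m (dec k.val).2).card + 1 :=
              Finset.card_insert_le _ _
          _ ≤ (({iU n m k, iU n m (k + 1)} : Finset _).card + (abSet n m (dec k.val).2).card) + 1 := by
              have := Finset.card_union_le ({iU n m k, iU n m (k + 1)} : Finset _) (abSet n m (dec k.val).2)
              omega
          _ ≤ 6 := by
              have h1 : ({iU n m k, iU n m (k + 1)} : Finset _).card ≤ 2 :=
                (Finset.card_insert_le _ _).trans (by simp)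
              have h2 := abSet_card (n := n) (m := m) (dec k.val).2
              omega
      · intro x y h
        rw [myF_right, myF_right]
        have hu1 : x (iU n m k) = y (iU n m k) := h _ (by simp)
        have hu2 : x (iU n m (k+1)) = y (iU n m (k+1)) := h _ (by simp)
        have hs : x (iS n m) = y (iS n m) := h _ (by simp)
        have hxn : xN (fun i => x (iA n m i) && x (iB n m i)) (dec k.val).2
            = xN (fun i => y (iA n m i) && y (iB n m i)) (dec k.val).2 :=
          xN_congr _ (fun j hj => h j (by simp [Finset.mem_union, hj]))
        rw [hu1, hu2, hs]
        congr 1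
        rw [cval, cval, monoB, monoB, if_pos hd, if_pos hd, hd, hxn]
    · refine ⟨({iU n m k, iU n m (k + 1)} ∪ (abSet n m (dec k.val).1 ∪ abSet n m (dec k.val).2)), ?_, ?_⟩
      · calc (({iU n m k, iU n m (k + 1)} : Finset _) ∪ (abSet n m (dec k.val).1 ∪ abSet n m (dec k.val).2)).card
            ≤ ({iU n m k, iU n m (k + 1)} : Finset _).card + (abSet n m (dec k.val).1 ∪ abSet n m (dec k.val).2).card :=
              Finset.card_union_le _ _
          _ ≤ 6 := by
              have h1 : ({iU n m k, iU n m (k + 1)} : Finset _).card ≤ 2 :=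
                (Finset.card_insert_le _ _).trans (by simp)
              have h2 := Finset.card_union_le (abSet n m (dec k.val).1) (abSet n m (dec k.val).2)
              have h3 := abSet_card (n := n) (m := m) (dec k.val).1
              have h4 := abSet_card (n := n) (m := m) (dec k.val).2
              omega
      · intro x y h
        rw [myF_right, myF_right]
        have hu1 : x (iU n m k) = y (iU n m k) := h _ (by simp)
        have hu2 : x (iU n m (k+1)) = y (iU n m (k+1)) := h _ (by simp)
        have hxn1 : xN (fun i => x (iA n m i) && x (iB n m i)) (dec k.val).1
            = xN (fun i => y (iA n m i) && y (iB n m i)) (dec k.val).1 :=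
          xN_congr _ (fun j hj => h j (by simp [Finset.mem_union, hj]))
        have hxn2 : xN (fun i => x (iA n m i) && x (iB n m i)) (dec k.val).2
            = xN (fun i => y (iA n m i) && y (iB n m i)) (dec k.val).2 :=
          xN_congr _ (fun j hj => h j (by simp [Finset.mem_union, hj]))
        rw [hu1, hu2]
        congr 1
        rw [cval, cval, monoB, monoB, if_neg hd, if_neg hd, hxn1, hxn2]

end MyF

lemma forall_fin_add {n m : ℕ} (P : Fin (n + m) → Prop) :
    (∀ i, P i) ↔ (∀ i : Fin n, P (Fin.castAdd m i)) ∧ (∀ j : Fin m, P (Fin.natAdd n j)) :=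
  ⟨fun h => ⟨fun i => h _, fun j => h _⟩, fun h i => Fin.addCases h.1 h.2 i⟩

variable {n m : ℕ} [NeZero m]

lemma cond_iff (a b : Fin n → Bool) (s : Bool) (u : Fin m → Bool) (z : Fin (n + m) → Bool) :
    (myF n m (glue n m a b s u) = z) ↔
      ((∀ i, (a i && b i) = z (Fin.castAdd m i)) ∧
       (∀ k : Fin m, xor (u k) (u (k + 1))
          = xor (z (Fin.natAdd n k)) (cval (fun i => a i && b i) s k.val))) := by
  rw [funext_iff, forall_fin_add]
  have harg : (fun i => glue n m a b s u (iA n m i) && glue n m a b s u (iB n m i))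
      = fun i => a i && b i := by
    funext i; rw [glue_iA, glue_iB]
  apply and_congr
  · apply forall_congr'
    intro i
    rw [myF_left, glue_iA, glue_iB]
  · apply forall_congr'
    intro k
    rw [myF_right, glue_iU, glue_iU, glue_iS, harg]
    have hbool : ∀ p q r t : Bool, (xor (xor p q) r = t) ↔ (xor p q = xor t r) := by decide
    exact hbool _ _ _ _

lemma count_eq (hm : n * (n + 1) / 2 ≤ m) (z : Fin (n + m) → Bool) :
    ((Finset.univ : Finset (Fin (n + (n + (1 + m))) → Bool)).filter fun w => myF n m w = z).card
      = 3 ^ (n - hw (fun i => z (Fin.castAdd m i))) *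
        ∑ s : Bool, (if (hw (fun j => z (Fin.natAdd n j))
            + (Cnum (fun i => z (Fin.castAdd m i))
              + if s then hw (fun i => z (Fin.castAdd m i)) else 0)) % 2 = 0 then 2 else 0) := by
  classical
  set x : Fin n → Bool := fun i => z (Fin.castAdd m i) with hx
  set y : Fin m → Bool := fun j => z (Fin.natAdd n j) with hy
  rw [Finset.card_filter]
  rw [← Fintype.sum_bijective _ (glue_bijective (n := n) (m := m))
      (fun t => if myF n m (glue n m t.1 t.2.1 t.2.2.1 t.2.2.2) = z then 1 else 0)
      (fun w => if myF n m w = z then 1 else 0) (fun t => rfl)]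
  rw [Fintype.sum_prod_type]
  have hinner : ∀ a : Fin n → Bool,
      (∑ t2 : (Fin n → Bool) × (Bool × (Fin m → Bool)),
        (if myF n m (glue n m a t2.1 t2.2.1 t2.2.2) = z then (1:ℕ) else 0))
      = ∑ b : Fin n → Bool, ∑ t3 : Bool × (Fin m → Bool),
        (if myF n m (glue n m a b t3.1 t3.2) = z then (1:ℕ) else 0) := by
    intro a
    rw [Fintype.sum_prod_type]
  rw [Finset.sum_congr rfl (fun a _ => hinner a)]
  have step : ∀ (a b : Fin n → Bool),
      (∑ t3 : Bool × (Fin m → Bool), (if myF n m (glue n m a b t3.1 t3.2) = z then (1:ℕ) else 0))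
      = if (∀ i, (a i && b i) = x i) then
          (∑ s : Bool, if (hw y + (Cnum x + if s then hw x else 0)) % 2 = 0 then 2 else 0)
        else 0 := by
    intro a b
    by_cases hA : ∀ i, (a i && b i) = x i
    · rw [if_pos hA, Fintype.sum_prod_type]
      apply Finset.sum_congr rfl
      intro s _
      have hfun : (fun i => a i && b i) = x := funext hA
      set v : Fin m → Bool := fun k => xor (y k) (cval x s k.val) with hv
      have hcond : ∀ u : Fin m → Bool, (myF n m (glue n m a b s u) = z)
          ↔ (∀ k : Fin m, xor (u k) (u (k + 1)) = v k) := by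
        intro u
        rw [cond_iff, hfun]
        constructor
        · rintro ⟨_, h2⟩; exact h2
        · intro h2; exact ⟨hA, h2⟩
      calc (∑ u : Fin m → Bool, if myF n m (glue n m a b s u) = z then (1:ℕ) else 0)
          = ∑ u : Fin m → Bool,
              (if (∀ k : Fin m, xor (u k) (u (k + 1)) = v k) then (1:ℕ) else 0) := by
            apply Finset.sum_congr rfl
            intro u _
            by_cases hu : myF n m (glue n m a b s u) = z
            · rw [if_pos hu, if_pos ((hcond u).mp hu)]
            · rw [if_neg hu, if_neg (fun hc => hu ((hcond u).mpr hc))]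
        _ = ((Finset.univ.filter fun u : Fin m → Bool =>
              ∀ k : Fin m, xor (u k) (u (k + 1)) = v k).card) := by
            rw [Finset.card_filter]
        _ = if hw v % 2 = 0 then 2 else 0 := cycle_count v
        _ = if (hw y + (Cnum x + if s then hw x else 0)) % 2 = 0 then 2 else 0 := by
            have hp := hw_xor_parity y (fun k : Fin m => cval x s k.val)
            beta_reduce at hp
            have hc := hw_cval hm x s
            rw [hv]
            rw [hp, hc]
    · rw [if_neg hA]
      apply Finset.sum_eq_zero
      intro t3 _
      rw [if_neg]
      intro hcontra
      exact hA ((cond_iff a b t3.1 t3.2 z).mp hcontra).1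
  have hmerge : (∑ a : Fin n → Bool, ∑ b : Fin n → Bool, ∑ t3 : Bool × (Fin m → Bool),
        (if myF n m (glue n m a b t3.1 t3.2) = z then (1:ℕ) else 0))
      = ∑ a : Fin n → Bool, ∑ b : Fin n → Bool,
          (if (∀ i, (a i && b i) = x i) then
            (∑ s : Bool, if (hw y + (Cnum x + if s then hw x else 0)) % 2 = 0 then 2 else 0)
          else 0) := by
    apply Finset.sum_congr rfl
    intro a _
    exact Finset.sum_congr rfl (fun b _ => step a b)
  rw [hmerge]
  rw [← Fintype.sum_prod_type (f := fun ab : (Fin n → Bool) × (Fin n → Bool) =>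
    if (∀ i, (ab.1 i && ab.2 i) = x i) then
      (∑ s : Bool, if (hw y + (Cnum x + if s then hw x else 0)) % 2 = 0 then 2 else 0)
    else 0)]
  rw [Finset.sum_ite, Finset.sum_const, Finset.sum_const_zero, add_zero, smul_eq_mul]
  congr 1
  exact and_count x

variable {n m : ℕ} [NeZero m]

lemma push_eq (hn : 1 ≤ n) (hm : n * (n + 1) / 2 ≤ m) :
    push (myF n m) (fun _ => (1 / 2 : ℝ) ^ (n + (n + (1 + m)))) = dHard' n m := by
  classical
  funext z
  set x : Fin n → Bool := fun i => z (Fin.castAdd m i) with hx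
  set y : Fin m → Bool := fun j => z (Fin.natAdd n j) with hy
  have hmpos : 0 < m := Nat.pos_of_ne_zero (NeZero.ne m)
  have hL : push (myF n m) (fun _ => (1 / 2 : ℝ) ^ (n + (n + (1 + m)))) z
      = (((Finset.univ.filter fun w => myF n m w = z).card : ℕ) : ℝ)
        * (1 / 2) ^ (n + (n + (1 + m))) := by
    rw [push, ← Finset.sum_filter, Finset.sum_const, nsmul_eq_mul]
  rw [hL, count_eq hm z]
  rw [dHard', dHard, splitFun]
  simp only [← hx, ← hy]
  rw [biased_eq]
  obtain ⟨d, hd⟩ : ∃ d, n = hw x + d := ⟨n - hw x, by have := hw_le x; omega⟩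
  have hsumK : (∑ s : Bool, if (hw y + (Cnum x + if s then hw x else 0)) % 2 = 0 then (2:ℕ) else 0)
      = (if (hw y + (Cnum x + hw x)) % 2 = 0 then 2 else 0)
        + (if (hw y + (Cnum x + 0)) % 2 = 0 then 2 else 0) := by
    rw [Fintype.sum_bool]
    norm_num
  by_cases hpar : hw x % 2 = 1
  · rw [if_pos hpar]
    have hK : (∑ s : Bool, if (hw y + (Cnum x + if s then hw x else 0)) % 2 = 0 then (2:ℕ) else 0)
        = 2 := by
      rw [hsumK]; split_ifs <;> omega
    rw [hK]
    push_cast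
    rw [show n - hw x = d from by omega]
    rw [show n + (n + (1 + m)) = (hw x + d) + ((hw x + d) + (1 + m)) from by omega]
    rw [show (1:ℝ) - 1/4 = 3/4 from by norm_num]
    rw [show ((1:ℝ)/4)^(hw x) = (1/2:ℝ)^(2 * hw x) from by rw [pow_mul]; norm_num]
    rw [show ((3:ℝ)/4)^d = 3^d * (1/2:ℝ)^(2*d) from by rw [pow_mul, ← mul_pow]; norm_num]
    ring
  · have hpar0 : hw x % 2 = 0 := by omega
    rw [if_neg hpar, unifParity, slice_card hmpos _ (by omega)]
    have hCb := Cnum_mod_even x hpar0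
    set q := m - 1 with hq
    by_cases hcy : hw y % 2 = (hw x / 2) % 2
    · rw [if_pos hcy]
      have hK : (∑ s : Bool, if (hw y + (Cnum x + if s then hw x else 0)) % 2 = 0 then (2:ℕ) else 0)
          = 4 := by
        rw [hsumK]; split_ifs <;> omega
      rw [hK]
      push_cast
      rw [show ((1:ℝ) / (2:ℝ) ^ q) = (1/2 : ℝ) ^ q from by rw [one_div_pow]]
      rw [show n - hw x = d from by omega]
      rw [show n + (n + (1 + m)) = (hw x + d) + ((hw x + d) + (1 + (q + 1))) from by omega]
      rw [show (1:ℝ) - 1/4 = 3/4 from by norm_num]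
      rw [show ((1:ℝ)/4)^(hw x) = (1/2:ℝ)^(2 * hw x) from by rw [pow_mul]; norm_num]
      rw [show ((3:ℝ)/4)^d = 3^d * (1/2:ℝ)^(2*d) from by rw [pow_mul, ← mul_pow]; norm_num]
      ring
    · rw [if_neg hcy]
      have hK : (∑ s : Bool, if (hw y + (Cnum x + if s then hw x else 0)) % 2 = 0 then (2:ℕ) else 0)
          = 0 := by
        rw [hsumK]; split_ifs <;> omega
      rw [hK]
      push_cast
      ring


end S11

theorem stmt11 (n m : ℕ) (hn : 1 ≤ n) (hm : n * (n + 1) / 2 ≤ m) :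
    ∃ (M : ℕ) (f : (Fin M → Bool) → Fin (n + m) → Bool),
      IsLocal 6 f ∧ push f (fun _ => (1 / 2 : ℝ) ^ M) = dHard' n m := by
  have hmpos : 1 ≤ m := by
    have h2 : 1 * 2 ≤ n * (n + 1) := Nat.mul_le_mul hn (by omega)
    omega
  haveI : NeZero m := ⟨by omega⟩
  exact ⟨n + (n + (1 + m)), S11.myF n m, S11.myF_local, S11.push_eq hn hm⟩
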